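/- arXiv:2308.10119 — 2 statements merged into one kernel-verified Lean document; each statement's English description precedes it below -/
import Mathlib

section
/- Fix integers m ≥ 2 and n ≥ 1, vectors x_1,…,x_m ∈ ℝ^n, weights w ∈ ℝ^m, and P > 0 such that Σ_{i=1}^m Σ_{t=1}^{n} (w_i x_{i,t})² ≤ m n P. For S ⊆ {1,…,m} set v_S = Σ_{i∈S} w_i x_i ∈ ℝ^n. Then the average squared Euclidean distance over all unordered pairs of distinct subsets satisfies (1 / (2 · C(2^m, 2))) · Σ_{S₁ ⊆ {1,…,m}} Σ_{S₂ ⊆ {1,…,m}} ‖v_{S₁} − v_{S₂}‖₂² ≤ 2^m m n P / (2^m − 1). -/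
open Finset

lemma count_superset {m : ℕ} (u : Finset (Fin m)) :
    ((univ : Finset (Finset (Fin m))).filter fun S => u ⊆ S).card = 2 ^ (m - u.card) := by
  have h : ((univ : Finset (Finset (Fin m))).filter fun S => u ⊆ S) = Icc u univ := by
    ext S; simp [Finset.mem_Icc]
  rw [h, Finset.card_Icc_finset (subset_univ u), card_univ, Fintype.card_fin]

lemma sum_over_subsets {m : ℕ} (f : Fin m → ℝ) :
    ∑ S : Finset (Fin m), ∑ i ∈ S, f i = 2 ^ (m - 1) * ∑ i, f i := by
  have h1 : ∀ S : Finset (Fin m), ∑ i ∈ S, f i = ∑ i, if i ∈ S then f i else 0 := by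
    intro S
    rw [Finset.sum_ite_mem, univ_inter]
  simp_rw [h1]
  rw [Finset.sum_comm]
  have h2 : ∀ i : Fin m, ∑ S : Finset (Fin m), (if i ∈ S then f i else 0)
      = 2 ^ (m - 1) * f i := by
    intro i
    rw [← Finset.sum_filter]
    rw [Finset.sum_const, nsmul_eq_mul]
    have : ((univ : Finset (Finset (Fin m))).filter fun S => i ∈ S).card = 2 ^ (m - 1) := by
      have := count_superset ({i} : Finset (Fin m))
      simpa using this
    rw [this]; push_cast; ring
  simp_rw [h2]
  simp [Finset.mul_sum]


lemma triple_swap {α β γ : Type*} [Fintype α] [Fintype β] [Fintype γ]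
    (g : α → β → γ → ℝ) :
    ∑ a : α, ∑ b : β, ∑ c : γ, g a b c = ∑ c : γ, ∑ a : α, ∑ b : β, g a b c := by
  calc ∑ a : α, ∑ b : β, ∑ c : γ, g a b c
      = ∑ a : α, ∑ c : γ, ∑ b : β, g a b c :=
        Finset.sum_congr rfl fun a _ => Finset.sum_comm
    _ = ∑ c : γ, ∑ a : α, ∑ b : β, g a b c := Finset.sum_comm

lemma triple_swap' {α β γ : Type*} [Fintype α] [Fintype β] [Fintype γ]
    (g : α → β → γ → ℝ) :
    ∑ a : α, ∑ b : β, ∑ c : γ, g a b c = ∑ b : β, ∑ c : γ, ∑ a : α, g a b c := by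
  calc ∑ a : α, ∑ b : β, ∑ c : γ, g a b c
      = ∑ b : β, ∑ a : α, ∑ c : γ, g a b c := Finset.sum_comm
    _ = ∑ b : β, ∑ c : γ, ∑ a : α, g a b c :=
        Finset.sum_congr rfl fun b _ => Finset.sum_comm

set_option maxHeartbeats 1000000 in
lemma sum_sq_over_subsets {m : ℕ} (hm : 2 ≤ m) (f : Fin m → ℝ) :
    ∑ S : Finset (Fin m), (∑ i ∈ S, f i) ^ 2
      = 2 ^ (m - 2) * ((∑ i, f i) ^ 2 + ∑ i, (f i) ^ 2) := by
  have h1 : ∀ S : Finset (Fin m), (∑ i ∈ S, f i) ^ 2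
      = ∑ i, ∑ j, ((if i ∈ S then f i else 0) * (if j ∈ S then f j else 0)) := by
    intro S
    rw [show (∑ i ∈ S, f i) = ∑ i, (if i ∈ S then f i else 0) from by
      rw [Finset.sum_ite_mem, univ_inter]]
    rw [sq, Finset.sum_mul_sum]
  rw [Finset.sum_congr rfl fun S _ => h1 S]
  rw [triple_swap' (α := Finset (Fin m)) (β := Fin m) (γ := Fin m)
    (fun S i j => (if i ∈ S then f i else 0) * (if j ∈ S then f j else 0))]
  have key : ∀ i j : Fin m, ∑ S : Finset (Fin m),
      ((if i ∈ S then f i else 0) * (if j ∈ S then f j else 0))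
      = (((univ : Finset (Finset (Fin m))).filter fun S => ({i, j} : Finset (Fin m)) ⊆ S).card : ℝ)
        * (f i * f j) := by
    intro i j
    have he : ∀ S : Finset (Fin m),
        ((if i ∈ S then f i else 0) * (if j ∈ S then f j else 0))
        = if ({i, j} : Finset (Fin m)) ⊆ S then f i * f j else 0 := by
      intro S
      by_cases hi : i ∈ S <;> by_cases hj : j ∈ S <;>
        simp [hi, hj, Finset.insert_subset_iff]
    simp_rw [he]
    rw [← Finset.sum_filter, Finset.sum_const, nsmul_eq_mul]
  simp_rw [key]
  have cdiag : ∀ i : Fin m,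
      (((univ : Finset (Finset (Fin m))).filter fun S => ({i, i} : Finset (Fin m)) ⊆ S).card : ℝ)
      = 2 ^ (m - 1) := by
    intro i
    have h := count_superset ({i, i} : Finset (Fin m))
    simp only [Finset.pair_eq_singleton] at h ⊢
    rw [h]
    simp
  have coff : ∀ i j : Fin m, i ≠ j →
      (((univ : Finset (Finset (Fin m))).filter fun S => ({i, j} : Finset (Fin m)) ⊆ S).card : ℝ)
      = 2 ^ (m - 2) := by
    intro i j hij
    rw [count_superset ({i, j} : Finset (Fin m)), Finset.card_pair hij]
    push_cast; ring
  have hsplit : ∀ i j : Fin m,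
      (((univ : Finset (Finset (Fin m))).filter fun S => ({i, j} : Finset (Fin m)) ⊆ S).card : ℝ)
        * (f i * f j)
      = 2 ^ (m - 2) * (f i * f j) + (if j = i then 2 ^ (m - 2) * (f i * f j) else 0) := by
    intro i j
    by_cases h : j = i
    · subst h
      rw [cdiag j]
      have : m - 1 = (m - 2) + 1 := by omega
      rw [this, pow_succ]
      simp; ring
    · rw [coff i j (Ne.symm h)]
      simp [h]
  simp_rw [hsplit]
  rw [Finset.sum_congr rfl (fun i _ => Finset.sum_add_distrib), Finset.sum_add_distrib]
  have e1 : ∑ i : Fin m, ∑ j : Fin m, ((2 : ℝ) ^ (m - 2) * (f i * f j))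
      = 2 ^ (m - 2) * (∑ i, f i) ^ 2 := by
    rw [sq, Finset.sum_mul_sum, Finset.mul_sum]
    exact Finset.sum_congr rfl fun i _ => by
      rw [Finset.mul_sum]
  have e2 : ∑ i : Fin m, ∑ j : Fin m, (if j = i then (2 : ℝ) ^ (m - 2) * (f i * f j) else 0)
      = 2 ^ (m - 2) * ∑ i, (f i) ^ 2 := by
    simp_rw [Finset.sum_ite_eq', mem_univ, if_true, Finset.mul_sum]
    exact Finset.sum_congr rfl fun i _ => by ring
  rw [e1, e2]; ring

lemma pair_sum {m : ℕ} (hm : 2 ≤ m) (f : Fin m → ℝ) :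
    ∑ S₁ : Finset (Fin m), ∑ S₂ : Finset (Fin m),
      ((∑ i ∈ S₁, f i) - (∑ i ∈ S₂, f i)) ^ 2 = 2 ^ (2 * m - 1) * ∑ i, (f i) ^ 2 := by
  have hN : (Finset.univ : Finset (Finset (Fin m))).card = 2 ^ m := by
    rw [card_univ, Fintype.card_finset, Fintype.card_fin]
  set T : ℝ := ∑ S₂ : Finset (Fin m), ∑ i ∈ S₂, f i with hT
  set B : ℝ := ∑ S₂ : Finset (Fin m), (∑ i ∈ S₂, f i) ^ 2 with hB
  have step : ∀ S₁ : Finset (Fin m), ∑ S₂ : Finset (Fin m),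
      ((∑ i ∈ S₁, f i) - (∑ i ∈ S₂, f i)) ^ 2
      = 2 ^ m * (∑ i ∈ S₁, f i) ^ 2 - 2 * ((∑ i ∈ S₁, f i) * T) + B := by
    intro S₁
    have h : ∀ S₂ : Finset (Fin m), ((∑ i ∈ S₁, f i) - (∑ i ∈ S₂, f i)) ^ 2
        = (∑ i ∈ S₁, f i) ^ 2 - 2 * (∑ i ∈ S₁, f i) * (∑ i ∈ S₂, f i)
          + (∑ i ∈ S₂, f i) ^ 2 := fun S₂ => by ring
    rw [Finset.sum_congr rfl fun S₂ _ => h S₂, Finset.sum_add_distrib,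
      Finset.sum_sub_distrib, Finset.sum_const, hN, ← Finset.mul_sum, ← hT, ← hB]
    push_cast; ring
  rw [Finset.sum_congr rfl fun S₁ _ => step S₁, Finset.sum_add_distrib,
    Finset.sum_sub_distrib, Finset.sum_const, hN, ← Finset.mul_sum, ← Finset.mul_sum,
    ← Finset.sum_mul, ← hT, ← hB]
  have hTv : T = 2 ^ (m - 1) * ∑ i, f i := sum_over_subsets f
  have hBv : B = 2 ^ (m - 2) * ((∑ i, f i) ^ 2 + ∑ i, (f i) ^ 2) :=
    sum_sq_over_subsets hm f
  have e3 : (2 : ℝ) ^ m * 2 ^ (m - 2) * 2 = 2 ^ (2 * m - 1) := by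
    rw [show 2 * m - 1 = m + ((m - 2) + 1) from by omega, pow_add, pow_add, pow_one]
    ring
  have e4 : (2 : ℝ) ^ (m - 1) * 2 ^ (m - 1) * 2 = 2 ^ (2 * m - 1) := by
    rw [show 2 * m - 1 = (m - 1) + ((m - 1) + 1) from by omega, pow_add, pow_add, pow_one]
    ring
  rw [hTv, hBv]

  linear_combination ((∑ i, f i) ^ 2) * (e3 - e4) + (∑ i, (f i) ^ 2) * e3

/-- **Average squared distance bound (21).**  Under the total power constraint
`∑_i ∑_t (w_i x_{i,t})² ≤ m n P`, the average squared Euclidean distance between sent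
signals `v_S = ∑_{i∈S} w_i x_i` over all unordered pairs of distinct subsets of
`{1,…,m}` is at most `2^m m n P / (2^m - 1)`. -/
theorem average_squared_distance_bound
    (m : ℕ) (hm : 2 ≤ m) (n : ℕ) (hn : 1 ≤ n)
    (x : Fin m → Fin n → ℝ) (w : Fin m → ℝ)
    (P : ℝ) (hP : 0 < P)
    (hpow : ∑ i : Fin m, ∑ t, (w i * x i t) ^ 2 ≤ m * n * P) :
    (1 / (2 * ((2 ^ m).choose 2 : ℝ)))
        * ∑ S₁ : Finset (Fin m), ∑ S₂ : Finset (Fin m),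
            ∑ t, ((∑ i ∈ S₁, w i * x i t) - ∑ i ∈ S₂, w i * x i t) ^ 2
      ≤ 2 ^ m * m * n * P / (2 ^ m - 1) := by
  have hTot : (∑ S₁ : Finset (Fin m), ∑ S₂ : Finset (Fin m),
        ∑ t, ((∑ i ∈ S₁, w i * x i t) - ∑ i ∈ S₂, w i * x i t) ^ 2)
      = 2 ^ (2 * m - 1) * ∑ t, ∑ i, (w i * x i t) ^ 2 := by
    rw [triple_swap (α := Finset (Fin m)) (β := Finset (Fin m)) (γ := Fin n)
      (fun S₁ S₂ t => ((∑ i ∈ S₁, w i * x i t) - ∑ i ∈ S₂, w i * x i t) ^ 2)]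
    rw [Finset.mul_sum]
    exact Finset.sum_congr rfl fun t _ => pair_sum hm (fun i => w i * x i t)
  have hE : ∑ t, ∑ i, (w i * x i t) ^ 2 ≤ m * n * P := by
    rw [Finset.sum_comm]; exact hpow
  have hE0 : (0 : ℝ) ≤ ∑ t, ∑ i, (w i * x i t) ^ 2 := by positivity
  have hchoose : ((2 ^ m).choose 2 : ℕ) = 2 ^ (m - 1) * (2 ^ m - 1) := by
    have h2 : (2 : ℕ) ^ m = 2 * 2 ^ (m - 1) := by
      conv_lhs => rw [show m = (m - 1) + 1 from by omega]
      rw [pow_succ]; ring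
    rw [Nat.choose_two_right, h2, Nat.mul_assoc,
      Nat.mul_div_cancel_left _ (by norm_num : 0 < 2)]
  have hCast : (((2 ^ m).choose 2 : ℕ) : ℝ) = 2 ^ (m - 1) * (2 ^ m - 1) := by
    rw [hchoose]
    have h1 : (1 : ℕ) ≤ 2 ^ m := Nat.one_le_two_pow
    push_cast [h1]
    ring
  rw [hTot, hCast]
  have hpos1 : (0 : ℝ) < 2 ^ (m - 1) := by positivity
  have hpos2 : (0 : ℝ) < (2 : ℝ) ^ m - 1 := by
    have : (1 : ℝ) < 2 ^ m := one_lt_pow₀ (by norm_num) (by omega)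
    linarith
  have hK : (0 : ℝ) < 2 ^ m * 2 ^ (m - 1) * (2 ^ m - 1) :=
    mul_pos (mul_pos (by positivity) hpos1) hpos2
  have e5 : (2 : ℝ) ^ (2 * m - 1) = 2 ^ m * 2 ^ (m - 1) := by
    rw [show 2 * m - 1 = m + (m - 1) from by omega, pow_add]
  rw [one_div_mul_eq_div, div_le_div_iff₀ (by positivity) hpos2, e5]
  nlinarith [mul_le_mul_of_nonneg_left hE hK.le,
    mul_nonneg hK.le hE0, hP, hpos1, hpos2]
end

section
/- Fix integers m ≥ 2 and n ≥ 1, vectors x_1,…,x_m ∈ ℝ^n, weights w ∈ ℝ^m, and P > 0 such that Σ_{i=1}^m Σ_{t=1}^{n} (w_i x_{i,t})² ≤ m n P. For S ⊆ {1,…,m} set v_S = Σ_{i∈S} w_i x_i ∈ ℝ^n. Then there exist two distinct subsets S ≠ S' of {1,…,m} such that ‖v_S − v_{S'}‖₂² ≤ 2^m m n P / (2^m − 1). -/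
open Finset

lemma sum_powerset_linear {ι : Type*} [DecidableEq ι] (u : Finset ι) (a : ι → ℝ) :
    2 * ∑ S ∈ u.powerset, ∑ i ∈ S, a i = 2 ^ u.card * ∑ i ∈ u, a i := by
  induction u using Finset.induction_on with
  | empty => simp
  | @insert j u' hj ih =>
    rw [Finset.sum_powerset_insert hj]
    have hins : ∀ S ∈ u'.powerset, ∑ i ∈ insert j S, a i = a j + ∑ i ∈ S, a i := by
      intro S hS
      rw [Finset.mem_powerset] at hS
      exact Finset.sum_insert (fun h => hj (hS h))
    rw [Finset.sum_congr rfl hins, Finset.sum_add_distrib, Finset.sum_const,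
      Finset.card_powerset, Finset.card_insert_of_notMem hj, Finset.sum_insert hj]
    simp only [nsmul_eq_mul]
    push_cast
    linear_combination 2 * ih

lemma sum_powerset_sq {ι : Type*} [DecidableEq ι] (u : Finset ι) (a : ι → ℝ) :
    4 * ∑ S ∈ u.powerset, (∑ i ∈ S, a i) ^ 2
      = 2 ^ u.card * ((∑ i ∈ u, a i) ^ 2 + ∑ i ∈ u, (a i) ^ 2) := by
  induction u using Finset.induction_on with
  | empty => simp
  | @insert j u' hj ih =>
    have hlin := sum_powerset_linear u' a
    rw [Finset.sum_powerset_insert hj]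
    have hins : ∀ S ∈ u'.powerset,
        (∑ i ∈ insert j S, a i) ^ 2
          = (∑ i ∈ S, a i) ^ 2 + 2 * a j * ∑ i ∈ S, a i + (a j) ^ 2 := by
      intro S hS
      rw [Finset.mem_powerset] at hS
      rw [Finset.sum_insert (fun h => hj (hS h))]
      ring
    rw [Finset.sum_congr rfl hins]
    simp only [Finset.sum_add_distrib, Finset.sum_const, Finset.card_powerset,
      Finset.card_insert_of_notMem hj, Finset.sum_insert hj, ← Finset.mul_sum,
      nsmul_eq_mul]
    push_cast
    linear_combination 2 * ih + 4 * a j * hlin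

lemma pair_identity (m : ℕ) (a : Fin m → ℝ) :
    2 * ∑ S : Finset (Fin m), ∑ S' : Finset (Fin m),
        ((∑ i ∈ S, a i) - ∑ i ∈ S', a i) ^ 2 = 4 ^ m * ∑ i, (a i) ^ 2 := by
  have hcard : ((Finset.univ : Finset (Finset (Fin m))).card : ℝ) = 2 ^ m := by
    rw [Finset.card_univ, Fintype.card_finset, Fintype.card_fin]; push_cast; ring
  have hpu : (Finset.univ : Finset (Finset (Fin m)))
      = (Finset.univ : Finset (Fin m)).powerset := (Finset.powerset_univ).symm
  have hlin := sum_powerset_linear (Finset.univ : Finset (Fin m)) a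
  have hsq := sum_powerset_sq (Finset.univ : Finset (Fin m)) a
  rw [Finset.card_univ, Fintype.card_fin] at hlin hsq
  set G : ℝ := ∑ S : Finset (Fin m), ∑ i ∈ S, a i with hG
  set Q : ℝ := ∑ S : Finset (Fin m), (∑ i ∈ S, a i) ^ 2 with hQ
  have hGv : 2 * G = 2 ^ m * ∑ i, a i := by rw [hG, hpu] at *; exact hlin
  have hQv : 4 * Q = 2 ^ m * ((∑ i, a i) ^ 2 + ∑ i, (a i) ^ 2) := by
    rw [hQ, hpu] at *; exact hsq
  have h4 : (4 : ℝ) ^ m = 2 ^ m * 2 ^ m := by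
    rw [← mul_pow]; norm_num
  have expand : ∑ S : Finset (Fin m), ∑ S' : Finset (Fin m),
      ((∑ i ∈ S, a i) - ∑ i ∈ S', a i) ^ 2
      = (2 ^ m : ℝ) * Q + (2 ^ m : ℝ) * Q - 2 * G * G := by
    have h1 : ∀ S : Finset (Fin m), ∑ S' : Finset (Fin m),
        ((∑ i ∈ S, a i) - ∑ i ∈ S', a i) ^ 2
        = (2 ^ m : ℝ) * (∑ i ∈ S, a i) ^ 2 - 2 * (∑ i ∈ S, a i) * G + Q := by
      intro S
      have h2 : ∀ S' : Finset (Fin m),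
          ((∑ i ∈ S, a i) - ∑ i ∈ S', a i) ^ 2
          = (∑ i ∈ S, a i) ^ 2 - 2 * (∑ i ∈ S, a i) * (∑ i ∈ S', a i)
            + (∑ i ∈ S', a i) ^ 2 := fun S' => by ring
      rw [Finset.sum_congr rfl (fun S' _ => h2 S'), Finset.sum_add_distrib,
        Finset.sum_sub_distrib, Finset.sum_const, ← Finset.mul_sum, ← hG, ← hQ,
        nsmul_eq_mul, hcard]
    rw [Finset.sum_congr rfl (fun S _ => h1 S), Finset.sum_add_distrib,
      Finset.sum_sub_distrib, Finset.sum_const, nsmul_eq_mul, hcard]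
    have h3 : ∑ S : Finset (Fin m), 2 * (∑ i ∈ S, a i) * G = 2 * G * G := by
      rw [← Finset.sum_mul, ← Finset.mul_sum, ← hG]
    have h5 : ∑ S : Finset (Fin m), (2:ℝ) ^ m * (∑ i ∈ S, a i) ^ 2
        = (2:ℝ) ^ m * Q := by rw [← Finset.mul_sum, ← hQ]
    rw [h3, h5]
    ring
  rw [expand]
  have hQ2 : 8 * ((2:ℝ) ^ m * Q)
      = 2 * (4 ^ m * ((∑ i, a i) ^ 2 + ∑ i, (a i) ^ 2)) := by
    linear_combination (2 * (2:ℝ) ^ m) * hQv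
      - 2 * ((∑ i, a i) ^ 2 + ∑ i, (a i) ^ 2) * h4
  have hG2 : 4 * (G * G) = 4 ^ m * (∑ i, a i) ^ 2 := by
    linear_combination (2 * G + 2 ^ m * ∑ i, a i) * hGv - (∑ i, a i) ^ 2 * h4
  linarith [hQ2, hG2]

/-- **Minimum-distance consequence.**  Under the total power constraint
`∑_i ∑_t (w_i x_{i,t})² ≤ m n P`, some pair of distinct subsets `S ≠ S'` of `{1,…,m}`
has squared signal distance `‖v_S - v_{S'}‖₂² ≤ 2^m m n P / (2^m - 1)`. -/
theorem exists_close_pair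
    (m : ℕ) (hm : 2 ≤ m) (n : ℕ) (hn : 1 ≤ n)
    (x : Fin m → Fin n → ℝ) (w : Fin m → ℝ)
    (P : ℝ) (hP : 0 < P)
    (hpow : ∑ i : Fin m, ∑ t, (w i * x i t) ^ 2 ≤ m * n * P) :
    ∃ S S' : Finset (Fin m), S ≠ S' ∧
      ∑ t, ((∑ i ∈ S, w i * x i t) - ∑ i ∈ S', w i * x i t) ^ 2
        ≤ 2 ^ m * m * n * P / (2 ^ m - 1) := by
  by_contra hcon
  push_neg at hcon
  set c : ℝ := 2 ^ m * m * n * P / (2 ^ m - 1) with hc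
  set F : Finset (Fin m) → Finset (Fin m) → ℝ := fun S S' =>
    ∑ t, ((∑ i ∈ S, w i * x i t) - ∑ i ∈ S', w i * x i t) ^ 2 with hF
  have hFnn : ∀ S S', 0 ≤ F S S' :=
    fun S S' => Finset.sum_nonneg fun t _ => sq_nonneg _
  have hm0 : (0:ℝ) < (m : ℝ) := by exact_mod_cast lt_of_lt_of_le (by norm_num) hm
  have hn0 : (0:ℝ) < (n : ℝ) := by exact_mod_cast hn
  have hmnP : (0 : ℝ) < (m : ℝ) * n * P := by positivity
  -- the total sum identity
  have key : 2 * ∑ S : Finset (Fin m), ∑ S' : Finset (Fin m), F S S'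
      = 4 ^ m * ∑ i : Fin m, ∑ t, (w i * x i t) ^ 2 := by
    have swap : ∑ S : Finset (Fin m), ∑ S' : Finset (Fin m), F S S'
        = ∑ t, ∑ S : Finset (Fin m), ∑ S' : Finset (Fin m),
            ((∑ i ∈ S, w i * x i t) - ∑ i ∈ S', w i * x i t) ^ 2 := by
      simp only [hF]
      exact (Finset.sum_congr rfl fun S _ => Finset.sum_comm).trans Finset.sum_comm
    have swap2 : ∑ i : Fin m, ∑ t, (w i * x i t) ^ 2
        = ∑ t, ∑ i : Fin m, (w i * x i t) ^ 2 := Finset.sum_comm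
    rw [swap, swap2, Finset.mul_sum, Finset.mul_sum]
    exact Finset.sum_congr rfl fun t _ => pair_identity m (fun i => w i * x i t)
  have hN : ((Finset.univ : Finset (Finset (Fin m))).card : ℝ) = 2 ^ m := by
    rw [Finset.card_univ, Fintype.card_finset, Fintype.card_fin]; push_cast; ring
  have hNe : ∀ S : Finset (Fin m), (Finset.univ.erase S).Nonempty := by
    intro S
    have h2 : 2 ≤ (Finset.univ : Finset (Finset (Fin m))).card := by
      rw [Finset.card_univ, Fintype.card_finset, Fintype.card_fin]
      calc 2 = 2 ^ 1 := by norm_num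
        _ ≤ 2 ^ m := Nat.pow_le_pow_right (by norm_num) (le_trans (by norm_num) hm)
    rw [← Finset.card_pos, Finset.card_erase_of_mem (Finset.mem_univ S)]
    omega
  have hinner : ∀ S : Finset (Fin m),
      ((2:ℝ) ^ m - 1) * c < ∑ S' ∈ Finset.univ.erase S, F S S' := by
    intro S
    have hlt : ∀ S' ∈ Finset.univ.erase S, c < F S S' := by
      intro S' hS'
      have hne : S ≠ S' := fun h => (Finset.mem_erase.mp hS').1 h.symm
      exact hcon S S' hne
    have hcarde : (((Finset.univ : Finset (Finset (Fin m))).erase S).card : ℝ)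
        = (2:ℝ) ^ m - 1 := by
      rw [Finset.card_erase_of_mem (Finset.mem_univ S), Finset.card_univ,
        Fintype.card_finset, Fintype.card_fin, Nat.cast_sub Nat.one_le_two_pow]
      push_cast; ring
    have := Finset.sum_lt_sum_of_nonempty (hNe S) hlt
    simp only [Finset.sum_const, nsmul_eq_mul] at this
    rw [hcarde] at this
    exact this
  have htot : (2:ℝ) ^ m * (((2:ℝ) ^ m - 1) * c)
      < ∑ S : Finset (Fin m), ∑ S' : Finset (Fin m), F S S' := by
    have step1 : ∀ S : Finset (Fin m),
        ∑ S' ∈ Finset.univ.erase S, F S S' ≤ ∑ S' : Finset (Fin m), F S S' :=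
      fun S => Finset.sum_le_sum_of_subset_of_nonneg (Finset.erase_subset _ _)
        (fun S' _ _ => hFnn S S')
    have step2 : ((Finset.univ : Finset (Finset (Fin m))).card : ℝ)
          * (((2:ℝ) ^ m - 1) * c)
        < ∑ S : Finset (Fin m), ∑ S' ∈ Finset.univ.erase S, F S S' := by
      have huniv : (Finset.univ : Finset (Finset (Fin m))).Nonempty :=
        Finset.univ_nonempty
      have := Finset.sum_lt_sum_of_nonempty huniv (fun S _ => hinner S)
      simpa [Finset.sum_const, nsmul_eq_mul] using this
    rw [hN] at step2
    exact lt_of_lt_of_le step2 (Finset.sum_le_sum fun S _ => step1 S)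
  have hpow2 : (1:ℝ) < 2 ^ m := by
    have h1 : ((1:ℕ) : ℝ) < ((2 ^ m : ℕ) : ℝ) := by
      exact_mod_cast Nat.one_lt_two_pow (by omega)
    push_cast at h1
    exact h1
  have hval : (2:ℝ) ^ m * (((2:ℝ) ^ m - 1) * c) = 4 ^ m * ((m:ℝ) * n * P) := by
    rw [hc]
    have hne : (2:ℝ) ^ m - 1 ≠ 0 := by linarith
    have h4 : (4 : ℝ) ^ m = 2 ^ m * 2 ^ m := by rw [← mul_pow]; norm_num
    field_simp
    rw [h4]; ring
  have hub : 2 * ∑ S : Finset (Fin m), ∑ S' : Finset (Fin m), F S S'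
      ≤ 4 ^ m * ((m:ℝ) * n * P) := by
    rw [key]
    exact mul_le_mul_of_nonneg_left hpow (by positivity)
  have h4mnP : (0:ℝ) < 4 ^ m * ((m:ℝ) * n * P) := by positivity
  rw [hval] at htot
  linarith
end
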